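/- Let A : X → 2^X be a monotone linear relation such that A0 is closed and dom A is dense in (A0)^⊥. If A is 3*-monotone, then A is paramonotone. -/

import Mathlib

lemma aux_affine_nonneg (a b : ℝ) (h : ∀ t : ℝ, 0 ≤ a + t * b) : b = 0 := by
  by_contra hb
  have h1 := h (-(a+1)/b)
  rw [div_mul_cancel₀ _ hb] at h1
  linarith

lemma aux_affine_bdd (c M : ℝ) (h : ∀ t : ℝ, (t-1)*c ≤ M) : c = 0 := by
  by_contra hc
  have h1 := h (1 + (M+1)/c)
  have : (1 + (M+1)/c - 1) * c = M + 1 := by field_simp; ring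
  rw [this] at h1
  linarith

/-- A 3*-monotone linear relation with A0 closed and dom A dense in (A0)^⊥ is paramonotone. -/
theorem threeStar_linear_relation_is_paramonotone
    {X : Type*} [NormedAddCommGroup X] [InnerProductSpace ℝ X] [CompleteSpace X]
    (A : X → Set X)
    (hlin : ∃ G : Submodule ℝ (X × X), ∀ x y, y ∈ A x ↔ (x, y) ∈ G)
    (hmono : ∀ x x' y y', x' ∈ A x → y' ∈ A y → (0:ℝ) ≤ inner ℝ (x - y) (x' - y'))
    (hA0closed : IsClosed (A 0))
    (hdense : ∀ v : X, (∀ c ∈ A 0, (inner ℝ c v : ℝ) = 0) →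
      v ∈ closure {x | (A x).Nonempty})
    (h3star : ∀ z, (A z).Nonempty → ∀ x x', x' ∈ A x →
      BddAbove {r : ℝ | ∃ y y', y' ∈ A y ∧ r = inner ℝ (z - y) (y' - x')}) :
    ∀ x x' y y', x' ∈ A x → y' ∈ A y →
      (inner ℝ (x - y) (x' - y') : ℝ) = 0 → x' ∈ A y ∧ y' ∈ A x := by
  obtain ⟨G, hG⟩ := hlin
  intro x x' y y' hx hy hperp
  set u := x - y with hu
  set u' := x' - y' with hu'
  have hxG : (x, x') ∈ G := (hG x x').mp hx
  have hyG : (y, y') ∈ G := (hG y y').mp hy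
  have huG : (u, u') ∈ G := by
    have := G.sub_mem hxG hyG
    simpa using this
  -- Step 1: inner ℝ v u' = 0 for all v in dom A
  have key : ∀ v : X, (A v).Nonempty → (inner ℝ v u' : ℝ) = 0 := by
    intro v hv
    obtain ⟨M, hM⟩ := h3star v hv u u' ((hG u u').mpr huG)
    apply aux_affine_bdd _ M
    intro t
    have htG : (t • u, t • u') ∈ G := by
      have := G.smul_mem t huG
      simpa [Prod.smul_mk] using this
    have hmem : ((t - 1) * inner ℝ v u' : ℝ) ∈
        {r : ℝ | ∃ y y', y' ∈ A y ∧ r = inner ℝ (v - y) (y' - u')} := by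
      refine ⟨t • u, t • u', (hG _ _).mpr htG, ?_⟩
      have : (t • u' - u' : X) = (t - 1) • u' := by
        rw [sub_smul, one_smul]
      rw [this, real_inner_smul_right, inner_sub_left, real_inner_smul_left, hperp]
      ring
    exact hM hmem
  -- Step 2: A0 ⊥ dom A
  have hA0perp : ∀ p ∈ A 0, ∀ v, (A v).Nonempty → (inner ℝ v p : ℝ) = 0 := by
    intro p hp v ⟨v', hv'⟩
    have hpG : ((0 : X), p) ∈ G := (hG 0 p).mp hp
    have hvG : (v, v') ∈ G := (hG v v').mp hv'
    apply aux_affine_nonneg (inner ℝ v v')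
    intro t
    have hmemG : (v, v' + t • p) ∈ G := by
      have := G.add_mem hvG (G.smul_mem t hpG)
      simpa using this
    have h0 : (0:X) ∈ A 0 := (hG 0 0).mpr G.zero_mem
    have := hmono v (v' + t • p) 0 0 ((hG _ _).mpr hmemG) h0
    simpa [inner_add_right, real_inner_smul_right] using this
  -- Step 3: u' ∈ A 0
  let K : Submodule ℝ X := G.comap (LinearMap.inr ℝ X X)
  have hKmem : ∀ w, w ∈ K ↔ w ∈ A 0 := by
    intro w
    constructor
    · intro hw; exact (hG 0 w).mpr hw
    · intro hw; exact (hG 0 w).mp hw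
  have hKclosed : IsClosed (K : Set X) := by
    have : (K : Set X) = A 0 := Set.ext hKmem
    rw [this]; exact hA0closed
  haveI : CompleteSpace K := hKclosed.completeSpace_coe
  obtain ⟨p, hp, q, hq, hpq⟩ := K.exists_add_mem_mem_orthogonal u'
  have hqdom : q ∈ closure {x | (A x).Nonempty} := by
    apply hdense
    intro c hc
    exact (Submodule.mem_orthogonal K q).mp hq c ((hKmem c).mpr hc)
  have hqperp : ∀ v ∈ {x | (A x).Nonempty}, (inner ℝ q v : ℝ) = 0 := by
    intro v hv
    have h1 : (inner ℝ v u' : ℝ) = 0 := key v hv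
    have h2 : (inner ℝ v p : ℝ) = 0 := hA0perp p ((hKmem p).mp hp) v hv
    have : (inner ℝ v q : ℝ) = 0 := by
      have : u' = p + q := hpq
      have h3 : (inner ℝ v u' : ℝ) = inner ℝ v p + inner ℝ v q := by
        rw [this, inner_add_right]
      rw [h1, h2] at h3
      linarith
    rw [real_inner_comm]; exact this
  have hq0 : q = 0 := by
    have hcl : q ∈ {w : X | (inner ℝ q w : ℝ) = 0} := by
      have hsub : {x | (A x).Nonempty} ⊆ {w : X | (inner ℝ q w : ℝ) = 0} := hqperp
      have hclosed : IsClosed {w : X | (inner ℝ q w : ℝ) = 0} := by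
        have : {w : X | (inner ℝ q w : ℝ) = 0} = (innerSL ℝ q) ⁻¹' {0} := rfl
        rw [this]
        exact IsClosed.preimage (innerSL ℝ q).continuous isClosed_singleton
      exact closure_minimal hsub hclosed hqdom
    have : (inner ℝ q q : ℝ) = 0 := hcl
    exact inner_self_eq_zero.mp this
  have hu'A0 : ((0:X), u') ∈ G := by
    have : u' = p := by rw [hpq, hq0, add_zero]
    rw [this]
    exact hp
  have huzero : (u, (0:X)) ∈ G := by
    have := G.sub_mem huG hu'A0
    simpa using this
  constructor
  · apply (hG y x').mpr
    have := G.sub_mem hxG huzero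
    have heq : ((x, x') - (u, 0) : X × X) = (y, x') := by
      simp [hu, Prod.ext_iff]
    rwa [heq] at this
  · apply (hG x y').mpr
    have := G.add_mem hyG huzero
    have heq : ((y, y') + (u, 0) : X × X) = (x, y') := by
      simp [hu, Prod.ext_iff]
    rwa [heq] at this
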